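/- Let $K \subset \mathbb{R}^N$ be measurable with finite diameter, $M \subset \mathbb{R}^N$ open with $\mathrm{dist}(M,K) > 0$, and suppose $\inf_{x \in M} \int_K J(x,y)\,dy > 0$ for a nonnegative symmetric kernel $J$ with the Lévy integrability condition. Then for every $f \in \mathcal{V}^J_\infty(M)$ and every $\kappa > 0$ there exists $a > 0$ such that $w := f + a\,\mathbf{1}_K$ satisfies $\mathcal{E}_J(w,\varphi) \le -\kappa\int_M \varphi(x)\,dx$ for all nonnegative $\varphi \in \mathcal{D}^J(M)$ with bounded support. -/

import Mathlib

open MeasureTheory Set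

noncomputable section

variable {N : ℕ}

/-- The signed bilinear form `ℰ_J(v,w) = ½ ∫∫ (v(x)-v(y))(w(x)-w(y)) J(x,y) dx dy`. -/
def bilinForm (J : EuclideanSpace ℝ (Fin N) → EuclideanSpace ℝ (Fin N) → ℝ)
    (v w : EuclideanSpace ℝ (Fin N) → ℝ) : ℝ :=
  (1 / 2) * ∫ p : EuclideanSpace ℝ (Fin N) × EuclideanSpace ℝ (Fin N),
    (v p.1 - v p.2) * (w p.1 - w p.2) * J p.1 p.2

/-- `v ∈ 𝒟^J(M)`: measurable, vanishing outside `M`, with finite energy. -/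
def memDJ (J : EuclideanSpace ℝ (Fin N) → EuclideanSpace ℝ (Fin N) → ℝ)
    (M : Set (EuclideanSpace ℝ (Fin N))) (v : EuclideanSpace ℝ (Fin N) → ℝ) : Prop :=
  Measurable v ∧ (∀ x ∉ M, v x = 0) ∧
    Integrable (fun p : EuclideanSpace ℝ (Fin N) × EuclideanSpace ℝ (Fin N) =>
      (v p.1 - v p.2) ^ 2 * J p.1 p.2)

/-- Lemma (subsolution property): if `K` is bounded measurable, `M` open with
`dist(M,K) > 0` and `inf_{x∈M} ∫_K J(x,y) dy > 0`, then for every `f ∈ 𝒱^J_∞(M)` and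
`κ > 0` there is `a > 0` such that `w = f + a·1_K` satisfies
`ℰ_J(w,φ) ≤ -κ ∫_M φ` for every nonnegative `φ ∈ 𝒟^J(M)` with bounded support. -/
theorem subsolution_property
    (J : EuclideanSpace ℝ (Fin N) → EuclideanSpace ℝ (Fin N) → ℝ)
    (hJpos : ∀ x y, 0 ≤ J x y) (hJsym : ∀ x y, J x y = J y x)
    (hJmeas : Measurable fun p : EuclideanSpace ℝ (Fin N) × EuclideanSpace ℝ (Fin N) => J p.1 p.2)
    -- Lévy integrability condition (J1):
    (CJ : ℝ)
    (hCJ : ∀ x, (∫⁻ y, ENNReal.ofReal (min 1 (dist x y ^ 2) * J x y)) ≤ ENNReal.ofReal CJ)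
    (K : Set (EuclideanSpace ℝ (Fin N))) (hKmeas : MeasurableSet K)
    (hKbd : Bornology.IsBounded K)
    (M : Set (EuclideanSpace ℝ (Fin N))) (hM : IsOpen M)
    -- `dist(M,K) > 0`:
    (hdist : ∃ δ > 0, ∀ x ∈ M, ∀ y ∈ K, δ ≤ dist x y)
    -- `inf_{x ∈ M} ∫_K J(x,y) dy > 0`:
    (hinf : ∃ θ > 0, ∀ x ∈ M, θ ≤ ∫ y in K, J x y)
    -- `f ∈ 𝒱^J_∞(M)`:
    (f : EuclideanSpace ℝ (Fin N) → ℝ) (hf : Measurable f)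
    (hfρ : IntegrableOn
      (fun p : EuclideanSpace ℝ (Fin N) × EuclideanSpace ℝ (Fin N) =>
        (f p.1 - f p.2) ^ 2 * J p.1 p.2) (M ×ˢ univ))
    (Cf : ℝ)
    (hCf : ∀ φ, memDJ J M φ → Integrable φ →
      |bilinForm J f φ| ≤ Cf * ∫ x in M, |φ x|)
    (κ : ℝ) (hκ : 0 < κ) :
    ∃ a > 0, ∀ φ, memDJ J M φ → (∀ x, 0 ≤ φ x) →
      Bornology.IsBounded (Function.support φ) →
      bilinForm J (fun x => f x + a * K.indicator (fun _ => (1 : ℝ)) x) φ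
        ≤ -κ * ∫ x in M, φ x := by
  classical
  obtain ⟨δ, hδpos, hdist⟩ := hdist
  obtain ⟨θ, hθpos, hinf⟩ := hinf
  set c : ℝ := min 1 (δ ^ 2) with hc
  have hcpos : 0 < c := lt_min one_pos (pow_pos hδpos 2)
  have hMK : ∀ x ∈ M, x ∉ K := by
    intro x hx hxK
    have := hdist x hx x hxK
    simp only [dist_self] at this
    linarith
  have hJx : ∀ x, Measurable fun y => J x y :=
    fun x => hJmeas.comp (measurable_prodMk_left)
  -- row bound: for `x ∈ M`, `∫⁻_K J(x,·) ≤ CJ/c`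
  have hrow : ∀ x ∈ M, (∫⁻ y in K, ENNReal.ofReal (J x y)) ≤ ENNReal.ofReal (CJ / c) := by
    intro x hx
    have h1 : (∫⁻ y in K, ENNReal.ofReal (J x y))
        ≤ ∫⁻ y in K, ENNReal.ofReal ((1 / c) * (min 1 (dist x y ^ 2) * J x y)) := by
      refine setLIntegral_mono ?_ ?_
      · exact (((measurable_const.min ((measurable_dist.comp
          (measurable_const.prodMk measurable_id)).pow_const 2)).mul (hJx x)).const_mul
          (1 / c)).ennreal_ofReal
      · intro y hy
        refine ENNReal.ofReal_le_ofReal ?_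
        have hd : δ ≤ dist x y := hdist x hx y hy
        have hmin : c ≤ min 1 (dist x y ^ 2) := by
          refine min_le_min le_rfl ?_
          nlinarith [dist_nonneg (x := x) (y := y)]
        have h2 : c * J x y ≤ min 1 (dist x y ^ 2) * J x y :=
          mul_le_mul_of_nonneg_right hmin (hJpos x y)
        calc J x y = (1 / c) * (c * J x y) := by field_simp
          _ ≤ (1 / c) * (min 1 (dist x y ^ 2) * J x y) :=
            mul_le_mul_of_nonneg_left h2 (by positivity)
    have h2 : (∫⁻ y in K, ENNReal.ofReal ((1 / c) * (min 1 (dist x y ^ 2) * J x y)))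
        = ENNReal.ofReal (1 / c) * ∫⁻ y in K, ENNReal.ofReal (min 1 (dist x y ^ 2) * J x y) := by
      simp_rw [ENNReal.ofReal_mul (by positivity : (0:ℝ) ≤ 1 / c)]
      exact lintegral_const_mul' _ _ ENNReal.ofReal_ne_top
    calc (∫⁻ y in K, ENNReal.ofReal (J x y))
        ≤ ENNReal.ofReal (1 / c) * ∫⁻ y in K, ENNReal.ofReal (min 1 (dist x y ^ 2) * J x y) := by
          rw [← h2]; exact h1
      _ ≤ ENNReal.ofReal (1 / c) * ENNReal.ofReal CJ :=
          mul_le_mul_right ((setLIntegral_le_lintegral _ _).trans (hCJ x)) _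
      _ = ENNReal.ofReal (CJ / c) := by
          rw [← ENNReal.ofReal_mul (by positivity : (0:ℝ) ≤ 1 / c)]
          ring_nf
  have hrow_ne : ∀ x ∈ M, (∫⁻ y in K, ENNReal.ofReal (J x y)) ≠ ⊤ :=
    fun x hx => ((hrow x hx).trans_lt ENNReal.ofReal_lt_top).ne
  have hθrow : ∀ x ∈ M, ENNReal.ofReal θ ≤ ∫⁻ y in K, ENNReal.ofReal (J x y) := by
    intro x hx
    rw [ENNReal.ofReal_le_iff_le_toReal (hrow_ne x hx)]
    have h := hinf x hx
    rwa [integral_eq_lintegral_of_nonneg_ae (ae_of_all _ fun y => hJpos x y)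
      (hJx x).aestronglyMeasurable] at h
  set a : ℝ := (max Cf 0 + κ) / θ with ha
  have hapos : 0 < a := div_pos (add_pos_of_nonneg_of_pos (le_max_right Cf 0) hκ) hθpos
  refine ⟨a, hapos, ?_⟩
  intro φ hφmem hφpos hφbd
  obtain ⟨hφm, hφ0, hφE⟩ := id hφmem
  have hφK : ∀ y ∈ K, φ y = 0 := fun y hy => hφ0 y (fun hyM => hMK y hyM hy)
  have hφind : ∀ x, K.indicator (fun _ => (1:ℝ)) x * φ x = 0 := by
    intro x
    by_cases hx : x ∈ K
    · simp [indicator_of_mem hx, hφK x hx]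
    · simp [indicator_of_notMem hx]
  -- finite energy of φ, in lintegral form
  have hEφ : (∫⁻ p : EuclideanSpace ℝ (Fin N) × EuclideanSpace ℝ (Fin N),
      ENNReal.ofReal ((φ p.1 - φ p.2) ^ 2 * J p.1 p.2)) < ⊤ := by
    have h := hφE.hasFiniteIntegral
    rwa [hasFiniteIntegral_iff_ofReal (ae_of_all _ fun p =>
      mul_nonneg (sq_nonneg _) (hJpos _ _))] at h
  -- φ ∈ L²(M)
  have hφ2meas : Measurable fun x => ENNReal.ofReal (φ x ^ 2) :=
    (hφm.pow_const 2).ennreal_ofReal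
  have hL2 : (∫⁻ x in M, ENNReal.ofReal (φ x ^ 2)) < ⊤ := by
    have hKrowmeas : Measurable fun x => ∫⁻ y in K, ENNReal.ofReal (J x y) :=
      Measurable.lintegral_prod_right (f := fun x y => ENNReal.ofReal (J x y))
        (hJmeas.ennreal_ofReal)
    have key : ENNReal.ofReal θ * ∫⁻ x in M, ENNReal.ofReal (φ x ^ 2)
        ≤ ∫⁻ p : EuclideanSpace ℝ (Fin N) × EuclideanSpace ℝ (Fin N),
          ENNReal.ofReal ((φ p.1 - φ p.2) ^ 2 * J p.1 p.2) := by
      calc ENNReal.ofReal θ * ∫⁻ x in M, ENNReal.ofReal (φ x ^ 2)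
          = ∫⁻ x in M, ENNReal.ofReal θ * ENNReal.ofReal (φ x ^ 2) :=
            (lintegral_const_mul' _ _ ENNReal.ofReal_ne_top).symm
        _ ≤ ∫⁻ x in M, ENNReal.ofReal (φ x ^ 2) * ∫⁻ y in K, ENNReal.ofReal (J x y) := by
            refine setLIntegral_mono (hφ2meas.mul hKrowmeas) ?_
            intro x hx
            rw [mul_comm]
            exact mul_le_mul_right (hθrow x hx) _
        _ = ∫⁻ x in M, ∫⁻ y in K, ENNReal.ofReal (φ x ^ 2 * J x y) := by
            refine setLIntegral_congr_fun hM.measurableSet (fun x hx => ?_)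
            rw [← lintegral_const_mul' (ENNReal.ofReal (φ x ^ 2)) _ ENNReal.ofReal_ne_top]
            refine lintegral_congr fun y => ?_
            rw [ENNReal.ofReal_mul (sq_nonneg _)]
        _ = ∫⁻ x in M, ∫⁻ y in K, ENNReal.ofReal ((φ x - φ y) ^ 2 * J x y) := by
            refine setLIntegral_congr_fun hM.measurableSet (fun x hx => ?_)
            refine setLIntegral_congr_fun hKmeas (fun y hy => ?_)
            rw [hφK y hy, sub_zero]
        _ = ∫⁻ p : EuclideanSpace ℝ (Fin N) × EuclideanSpace ℝ (Fin N) in M ×ˢ K,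
              ENNReal.ofReal ((φ p.1 - φ p.2) ^ 2 * J p.1 p.2) := by
            rw [Measure.volume_eq_prod, ← Measure.prod_restrict, lintegral_prod]
            exact Measurable.aemeasurable (by fun_prop)
        _ ≤ _ := by
            rw [Measure.volume_eq_prod]
            exact setLIntegral_le_lintegral _ _
    by_contra hcon
    rw [not_lt, top_le_iff] at hcon
    rw [hcon, ENNReal.mul_top (ENNReal.ofReal_pos.mpr hθpos).ne'] at key
    exact (key.trans_lt hEφ).ne rfl
  have hφ2glob : (∫⁻ x, ENNReal.ofReal (φ x ^ 2)) < ⊤ := by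
    have heq : (∫⁻ x, ENNReal.ofReal (φ x ^ 2)) = ∫⁻ x in M, ENNReal.ofReal (φ x ^ 2) := by
      rw [← lintegral_indicator hM.measurableSet]
      refine lintegral_congr fun x => ?_
      by_cases hx : x ∈ M
      · simp [hx]
      · simp [hx, hφ0 x hx]
    rw [heq]; exact hL2
  have hSmeas : MeasurableSet (Function.support φ) := measurableSet_support hφm
  have hφint : Integrable φ := by
    refine ⟨hφm.aestronglyMeasurable, ?_⟩
    rw [hasFiniteIntegral_iff_ofReal (ae_of_all _ hφpos)]
    have hb : ∀ x, ENNReal.ofReal (φ x)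
        ≤ ENNReal.ofReal (φ x ^ 2) + (Function.support φ).indicator 1 x := by
      intro x
      by_cases hx : φ x = 0
      · simp [hx]
      · have hxS : x ∈ Function.support φ := hx
        calc ENNReal.ofReal (φ x) ≤ ENNReal.ofReal (φ x ^ 2 + 1) :=
              ENNReal.ofReal_le_ofReal (by nlinarith [hφpos x])
          _ = ENNReal.ofReal (φ x ^ 2) + 1 := by
              rw [ENNReal.ofReal_add (sq_nonneg _) zero_le_one, ENNReal.ofReal_one]
          _ = ENNReal.ofReal (φ x ^ 2) + (Function.support φ).indicator 1 x := by
              rw [indicator_of_mem hxS]; rfl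
    calc (∫⁻ x, ENNReal.ofReal (φ x))
        ≤ ∫⁻ x, (ENNReal.ofReal (φ x ^ 2) + (Function.support φ).indicator 1 x) :=
          lintegral_mono hb
      _ = (∫⁻ x, ENNReal.ofReal (φ x ^ 2)) + ∫⁻ x, (Function.support φ).indicator 1 x :=
          lintegral_add_left hφ2meas _
      _ < ⊤ := by
          rw [lintegral_indicator_one hSmeas]
          exact ENNReal.add_lt_top.mpr ⟨hφ2glob, hφbd.measure_lt_top⟩
  have hφlint : (∫⁻ x, ENNReal.ofReal (φ x)) < ⊤ := by
    have h := hφint.hasFiniteIntegral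
    rwa [hasFiniteIntegral_iff_ofReal (ae_of_all _ hφpos)] at h
  -- the coupling function F and its swap F'
  set F : EuclideanSpace ℝ (Fin N) × EuclideanSpace ℝ (Fin N) → ℝ :=
    fun p => φ p.1 * (K.indicator (fun _ => (1:ℝ)) p.2 * J p.1 p.2) with hFdef
  have hFmeas : Measurable F :=
    (hφm.comp measurable_fst).mul
      (((measurable_const.indicator hKmeas).comp measurable_snd).mul hJmeas)
  have hFpos : ∀ p, 0 ≤ F p := fun p =>
    mul_nonneg (hφpos _) (mul_nonneg (indicator_nonneg (fun _ _ => zero_le_one) _) (hJpos _ _))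
  have hinnerlin : ∀ x, (∫⁻ y, ENNReal.ofReal (F (x, y)))
      = ENNReal.ofReal (φ x) * ∫⁻ y in K, ENNReal.ofReal (J x y) := by
    intro x
    calc (∫⁻ y, ENNReal.ofReal (F (x, y)))
        = ∫⁻ y, ENNReal.ofReal (φ x)
            * ENNReal.ofReal (K.indicator (fun _ => (1:ℝ)) y * J x y) := by
          simp_rw [hFdef, ENNReal.ofReal_mul (hφpos x)]
      _ = ENNReal.ofReal (φ x)
            * ∫⁻ y, ENNReal.ofReal (K.indicator (fun _ => (1:ℝ)) y * J x y) :=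
          lintegral_const_mul' _ _ ENNReal.ofReal_ne_top
      _ = ENNReal.ofReal (φ x) * ∫⁻ y in K, ENNReal.ofReal (J x y) := by
          congr 1
          rw [← lintegral_indicator hKmeas]
          refine lintegral_congr fun y => ?_
          by_cases hy : y ∈ K
          · simp [indicator_of_mem hy]
          · simp [indicator_of_notMem hy]
  have hFlint : (∫⁻ p : EuclideanSpace ℝ (Fin N) × EuclideanSpace ℝ (Fin N),
      ENNReal.ofReal (F p)) ≤ ENNReal.ofReal (CJ / c) * ∫⁻ x, ENNReal.ofReal (φ x) := by
    rw [Measure.volume_eq_prod, lintegral_prod _ hFmeas.ennreal_ofReal.aemeasurable]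
    calc (∫⁻ x, ∫⁻ y, ENNReal.ofReal (F (x, y)))
        ≤ ∫⁻ x, ENNReal.ofReal (CJ / c) * ENNReal.ofReal (φ x) := by
          refine lintegral_mono fun x => ?_
          rw [hinnerlin x]
          by_cases hx : φ x = 0
          · simp [hx]
          · have hxM : x ∈ M := by
              by_contra h; exact hx (hφ0 x h)
            rw [mul_comm (ENNReal.ofReal (CJ / c))]
            exact mul_le_mul_right (hrow x hxM) _
      _ = _ := lintegral_const_mul' _ _ ENNReal.ofReal_ne_top
  have hFint : Integrable F := by
    refine ⟨hFmeas.aestronglyMeasurable, ?_⟩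
    rw [hasFiniteIntegral_iff_ofReal (ae_of_all _ hFpos)]
    exact hFlint.trans_lt (ENNReal.mul_lt_top ENNReal.ofReal_lt_top hφlint)
  set e : (EuclideanSpace ℝ (Fin N) × EuclideanSpace ℝ (Fin N))
      ≃ᵐ (EuclideanSpace ℝ (Fin N) × EuclideanSpace ℝ (Fin N)) :=
    MeasurableEquiv.prodComm with he
  have hemap : Measure.map (⇑e)
      (volume : Measure (EuclideanSpace ℝ (Fin N) × EuclideanSpace ℝ (Fin N))) = volume := by
    have hcoe : ⇑e = Prod.swap := rfl
    rw [hcoe, Measure.volume_eq_prod, Measure.prod_swap, ← Measure.volume_eq_prod]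
  set F' : EuclideanSpace ℝ (Fin N) × EuclideanSpace ℝ (Fin N) → ℝ :=
    fun p => φ p.2 * (K.indicator (fun _ => (1:ℝ)) p.1 * J p.1 p.2) with hF'def
  have hF'e : ∀ p, (F' ∘ ⇑e) p = F p := by
    intro p
    show φ p.1 * (K.indicator (fun _ => (1:ℝ)) p.2 * J p.2 p.1)
      = φ p.1 * (K.indicator (fun _ => (1:ℝ)) p.2 * J p.1 p.2)
    rw [hJsym p.2 p.1]
  have hF'int : Integrable F' := by
    rw [← hemap, integrable_map_equiv]
    rw [funext hF'e]
    exact hFint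
  have hFF' : (∫ p, F' p) = ∫ p, F p := by
    conv_lhs => rw [← hemap]
    rw [integral_map_equiv]
    exact integral_congr_ae (ae_of_all _ hF'e)
  -- the symmetrized f-energy is integrable on univ ×ˢ M
  have hfEswap : IntegrableOn
      (fun p : EuclideanSpace ℝ (Fin N) × EuclideanSpace ℝ (Fin N) =>
        (f p.1 - f p.2) ^ 2 * J p.1 p.2) (univ ×ˢ M) := by
    have hpre : ⇑e ⁻¹' (M ×ˢ univ) = univ ×ˢ M := by
      ext p
      simp only [mem_preimage, mem_prod, mem_univ, true_and, and_true]
      exact Iff.rfl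
    have hmap : volume.restrict (M ×ˢ univ)
        = Measure.map (⇑e) (volume.restrict (univ ×ˢ M)) := by
      conv_lhs => rw [← hemap]
      rw [Measure.restrict_map e.measurable (hM.measurableSet.prod MeasurableSet.univ), hpre]
    have h := hfρ
    rw [IntegrableOn, hmap, integrable_map_equiv] at h
    have hfe : ((fun p : EuclideanSpace ℝ (Fin N) × EuclideanSpace ℝ (Fin N) =>
        (f p.1 - f p.2) ^ 2 * J p.1 p.2) ∘ ⇑e)
        = fun p : EuclideanSpace ℝ (Fin N) × EuclideanSpace ℝ (Fin N) =>
          (f p.1 - f p.2) ^ 2 * J p.1 p.2 := by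
      funext p
      show (f p.2 - f p.1) ^ 2 * J p.2 p.1 = (f p.1 - f p.2) ^ 2 * J p.1 p.2
      rw [hJsym p.2 p.1]; ring
    rwa [hfe] at h
  -- the mixed term G
  set G : EuclideanSpace ℝ (Fin N) × EuclideanSpace ℝ (Fin N) → ℝ :=
    fun p => (f p.1 - f p.2) * (φ p.1 - φ p.2) * J p.1 p.2 with hGdef
  set g : EuclideanSpace ℝ (Fin N) × EuclideanSpace ℝ (Fin N) → ℝ :=
    fun p => (1/2) * ((f p.1 - f p.2) ^ 2 * J p.1 p.2)
      + (1/2) * ((φ p.1 - φ p.2) ^ 2 * J p.1 p.2) with hgdef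
  have hGmeas : Measurable G :=
    (((hf.comp measurable_fst).sub (hf.comp measurable_snd)).mul
      ((hφm.comp measurable_fst).sub (hφm.comp measurable_snd))).mul hJmeas
  have hGbound : ∀ p, ‖G p‖ ≤ g p := by
    intro p
    have hc' := hJpos p.1 p.2
    have h1 : |(f p.1 - f p.2) * (φ p.1 - φ p.2)|
        ≤ (1/2) * (f p.1 - f p.2) ^ 2 + (1/2) * (φ p.1 - φ p.2) ^ 2 := by
      rw [abs_le]
      constructor <;>
        nlinarith [sq_nonneg ((f p.1 - f p.2) + (φ p.1 - φ p.2)),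
          sq_nonneg ((f p.1 - f p.2) - (φ p.1 - φ p.2))]
    rw [Real.norm_eq_abs]
    calc |G p| = |(f p.1 - f p.2) * (φ p.1 - φ p.2)| * J p.1 p.2 := by
          rw [hGdef, abs_mul, abs_of_nonneg hc']
      _ ≤ ((1/2) * (f p.1 - f p.2) ^ 2 + (1/2) * (φ p.1 - φ p.2) ^ 2) * J p.1 p.2 :=
          mul_le_mul_of_nonneg_right h1 hc'
      _ = g p := by rw [hgdef]; ring
  have hgA : IntegrableOn g (M ×ˢ univ) :=
    (hfρ.const_mul (1/2)).add ((hφE.integrableOn).const_mul (1/2))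
  have hgB : IntegrableOn g (Mᶜ ×ˢ M) :=
    ((hfEswap.mono_set (prod_mono (subset_univ _) subset_rfl)).const_mul (1/2)).add
      ((hφE.integrableOn).const_mul (1/2))
  have hGA : IntegrableOn G (M ×ˢ univ) :=
    Integrable.mono' hgA hGmeas.aestronglyMeasurable (ae_of_all _ hGbound)
  have hGB : IntegrableOn G (Mᶜ ×ˢ M) :=
    Integrable.mono' hgB hGmeas.aestronglyMeasurable (ae_of_all _ hGbound)
  have hGsplit : G = fun p => (M ×ˢ univ).indicator G p + (Mᶜ ×ˢ M).indicator G p := by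
    funext p
    by_cases h1 : p.1 ∈ M
    · rw [indicator_of_mem (show p ∈ M ×ˢ univ from ⟨h1, mem_univ _⟩),
        indicator_of_notMem (fun hmem => hmem.1 h1), add_zero]
    · by_cases h2 : p.2 ∈ M
      · rw [indicator_of_notMem (fun hmem => h1 hmem.1),
          indicator_of_mem (show p ∈ Mᶜ ×ˢ M from ⟨h1, h2⟩), zero_add]
      · have hG0 : G p = 0 := by
          rw [hGdef]
          show (f p.1 - f p.2) * (φ p.1 - φ p.2) * J p.1 p.2 = 0
          rw [hφ0 p.1 h1, hφ0 p.2 h2]; ring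
        rw [indicator_of_notMem (fun hmem => h1 hmem.1),
          indicator_of_notMem (fun hmem => h2 hmem.2), hG0, add_zero]
  have hGint : Integrable G := by
    rw [hGsplit]
    exact (hGA.integrable_indicator (hM.measurableSet.prod MeasurableSet.univ)).add
      (hGB.integrable_indicator (hM.measurableSet.compl.prod hM.measurableSet))
  -- splitting the integrand
  have hintegrand : (fun p : EuclideanSpace ℝ (Fin N) × EuclideanSpace ℝ (Fin N) =>
      (f p.1 + a * K.indicator (fun _ => (1:ℝ)) p.1
        - (f p.2 + a * K.indicator (fun _ => (1:ℝ)) p.2)) * (φ p.1 - φ p.2) * J p.1 p.2)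
      = fun p => G p + a * (-F' p + -F p) := by
    funext p
    have h1 := hφind p.1
    have h2 := hφind p.2
    simp only [hGdef, hFdef, hF'def]
    linear_combination (a * J p.1 p.2) * h1 + (a * J p.1 p.2) * h2
  have hHint : Integrable (fun p => a * (-F' p + -F p)) :=
    (Integrable.add hF'int.neg hFint.neg).const_mul a
  have hsplit : (∫ p, (G p + a * (-F' p + -F p)))
      = (∫ p, G p) + a * (-(∫ p, F p) + -(∫ p, F p)) := by
    rw [integral_add hGint hHint, integral_const_mul]
    have h9 : (∫ p, (-F' p + -F p)) = -(∫ p, F p) + -(∫ p, F p) := by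
      rw [integral_add]
      rotate_left
      · exact hF'int.neg
      · exact hFint.neg
      rw [integral_neg, integral_neg, hFF']
    rw [h9]
  -- Fubini for F
  have hinner : ∀ x, (∫ y, F (x, y)) = φ x * ∫ y in K, J x y := by
    intro x
    calc (∫ y, F (x, y))
        = φ x * ∫ y, K.indicator (fun _ => (1:ℝ)) y * J x y := by
          simp only [hFdef]; exact integral_const_mul _ _
      _ = φ x * ∫ y in K, J x y := by
          congr 1
          rw [← integral_indicator hKmeas]
          refine integral_congr_ae (ae_of_all _ fun y => ?_)
          by_cases hy : y ∈ K
          · simp [indicator_of_mem hy]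
          · simp [indicator_of_notMem hy]
  have hFub : (∫ p, F p) = ∫ x, φ x * ∫ y in K, J x y := by
    rw [Measure.volume_eq_prod, integral_prod _ (by rwa [← Measure.volume_eq_prod])]
    exact integral_congr_ae (ae_of_all _ fun x => hinner x)
  have hmarg : Integrable (fun x => φ x * ∫ y in K, J x y) := by
    have h := Integrable.integral_prod_left
      (show Integrable F ((volume : Measure (EuclideanSpace ℝ (Fin N))).prod volume) by
        rwa [← Measure.volume_eq_prod])
    exact h.congr (ae_of_all _ fun x => hinner x)
  have hI : θ * ∫ x in M, φ x ≤ ∫ p, F p := by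
    rw [hFub]
    have h1 : (∫ x, φ x * ∫ y in K, J x y) = ∫ x in M, φ x * ∫ y in K, J x y :=
      (setIntegral_eq_integral_of_forall_compl_eq_zero fun x hx => by
        rw [hφ0 x hx, zero_mul]).symm
    rw [h1, ← integral_const_mul]
    refine setIntegral_mono_on ((hφint.const_mul θ).integrableOn) hmarg.integrableOn
      hM.measurableSet ?_
    intro x hx
    calc θ * φ x = φ x * θ := mul_comm _ _
      _ ≤ φ x * ∫ y in K, J x y := mul_le_mul_of_nonneg_left (hinf x hx) (hφpos x)
  have hT0 : 0 ≤ ∫ x in M, φ x := setIntegral_nonneg hM.measurableSet fun x _ => hφpos x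
  have habs : (∫ x in M, |φ x|) = ∫ x in M, φ x :=
    setIntegral_congr_fun hM.measurableSet fun x _ => abs_of_nonneg (hφpos x)
  have hfb : bilinForm J f φ ≤ max Cf 0 * ∫ x in M, φ x := by
    have h := hCf φ hφmem hφint
    rw [habs] at h
    exact (le_abs_self _).trans (h.trans (mul_le_mul_of_nonneg_right (le_max_left _ _) hT0))
  have hbf : bilinForm J f φ = (1/2) * ∫ p, G p := rfl
  have hbil : bilinForm J (fun x => f x + a * K.indicator (fun _ => (1:ℝ)) x) φ
      = bilinForm J f φ - a * ∫ p, F p := by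
    show (1/2) * (∫ p : EuclideanSpace ℝ (Fin N) × EuclideanSpace ℝ (Fin N),
      (f p.1 + a * K.indicator (fun _ => (1:ℝ)) p.1
        - (f p.2 + a * K.indicator (fun _ => (1:ℝ)) p.2)) * (φ p.1 - φ p.2) * J p.1 p.2)
      = bilinForm J f φ - a * ∫ p, F p
    rw [hintegrand, hsplit, hbf]
    ring
  rw [hbil]
  have haθ : a * θ = max Cf 0 + κ := by
    rw [ha]; field_simp
  calc bilinForm J f φ - a * ∫ p, F p
      ≤ max Cf 0 * (∫ x in M, φ x) - a * (θ * ∫ x in M, φ x) :=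
        sub_le_sub hfb (mul_le_mul_of_nonneg_left hI hapos.le)
    _ = (max Cf 0 - a * θ) * ∫ x in M, φ x := by ring
    _ = -κ * ∫ x in M, φ x := by rw [haθ]; ring

end
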